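/- Gödel's theorem on double negation in predicate logic: let ⊢_* be intuitionistic first-order predicate logic plus additional axioms contained in classical predicate logic ⊢_c^Q. Then (Γ ⊢_c^Q φ ⟺ Γ ⊢_*^Q ¬¬φ for all Γ, φ) if and only if ⊢_*^Q satisfies the double negation shift ∀x¬¬φ ⊢ ¬¬∀xφ for all φ. -/
import Mathlib


/-- A single-conclusion entailment relation on `S`. -/
structure IsEntailment {S : Type*} [DecidableEq S] (E : Finset S → S → Prop) : Prop where
  refl : ∀ (U : Finset S) (a : S), a ∈ U → E U a
  mono : ∀ (U U' : Finset S) (a : S), E U a → E (U ∪ U') a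
  cut : ∀ (V V' : Finset S) (a b : S), E V b → E (insert b V') a → E (V ∪ V') a

/-- A nucleus over an entailment relation. -/
structure IsNucleus {S : Type*} [DecidableEq S] (E : Finset S → S → Prop) (j : S → S) : Prop where
  lj : ∀ (U : Finset S) (a b : S), E (insert a U) (j b) → E (insert (j a) U) (j b)
  rj : ∀ (U : Finset S) (b : S), E U b → E U (j b)

/-- First-order formulas over a purely relational language (terms are
variables, indexed by naturals). -/
inductive FOF where
  | pred : ℕ → List ℕ → FOF
  | top : FOF
  | bot : FOF
  | and : FOF → FOF → FOF
  | or : FOF → FOF → FOF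
  | imp : FOF → FOF → FOF
  | neg : FOF → FOF
  | all : ℕ → FOF → FOF
  | ex : ℕ → FOF → FOF
deriving DecidableEq

/-- Free variables of a formula. -/
def FOF.free : FOF → Finset ℕ
  | pred _ l => l.toFinset
  | top => ∅
  | bot => ∅
  | and φ ψ => φ.free ∪ ψ.free
  | or φ ψ => φ.free ∪ ψ.free
  | imp φ ψ => φ.free ∪ ψ.free
  | neg φ => φ.free
  | all x φ => φ.free.erase x
  | ex x φ => φ.free.erase x

/-- Substitution `φ[t/x]` of the variable (term) `t` for the variable `x`. -/
def FOF.subst (x t : ℕ) : FOF → FOF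
  | pred n l => pred n (l.map fun v => if v = x then t else v)
  | top => top
  | bot => bot
  | and φ ψ => and (φ.subst x t) (ψ.subst x t)
  | or φ ψ => or (φ.subst x t) (ψ.subst x t)
  | imp φ ψ => imp (φ.subst x t) (ψ.subst x t)
  | neg φ => neg (φ.subst x t)
  | all y φ => if y = x then all y φ else all y (φ.subst x t)
  | ex y φ => if y = x then ex y φ else ex y (φ.subst x t)

/-- `t` is free for `x` in `φ`: substituting `t` for `x` captures no variable. -/
def FOF.freeFor (t x : ℕ) : FOF → Prop
  | pred _ _ => True
  | top => True
  | bot => True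
  | and φ ψ => φ.freeFor t x ∧ ψ.freeFor t x
  | or φ ψ => φ.freeFor t x ∧ ψ.freeFor t x
  | imp φ ψ => φ.freeFor t x ∧ ψ.freeFor t x
  | neg φ => φ.freeFor t x
  | all y φ => x = y ∨ (t ≠ y ∧ φ.freeFor t x)
  | ex y φ => x = y ∨ (t ≠ y ∧ φ.freeFor t x)

/-- Generators of intuitionistic first-order predicate logic `⊢_i^Q`. -/
structure IntQGen (E : Finset FOF → FOF → Prop) : Prop where
  ent : IsEntailment E
  rimp : ∀ (Γ : Finset FOF) (φ ψ : FOF), E (insert φ Γ) ψ → E Γ (φ.imp ψ)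
  andI : ∀ φ ψ : FOF, E {φ, ψ} (φ.and ψ)
  andE1 : ∀ φ ψ : FOF, E {φ.and ψ} φ
  andE2 : ∀ φ ψ : FOF, E {φ.and ψ} ψ
  orI1 : ∀ φ ψ : FOF, E {φ} (φ.or ψ)
  orI2 : ∀ φ ψ : FOF, E {ψ} (φ.or ψ)
  orE : ∀ φ ψ δ : FOF, E {φ.or ψ, φ.imp δ, ψ.imp δ} δ
  mp : ∀ φ ψ : FOF, E {φ, φ.imp ψ} ψ
  topI : E ∅ FOF.top
  pc1 : ∀ φ : FOF, E {φ.imp .bot} φ.neg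
  pc2 : ∀ φ : FOF, E {φ.neg} (φ.imp .bot)
  efq : ∀ φ : FOF, E {FOF.bot} φ
  lall : ∀ (x t : ℕ) (φ : FOF), φ.freeFor t x → E {FOF.all x φ} (φ.subst x t)
  rex : ∀ (x t : ℕ) (φ : FOF), φ.freeFor t x → E {φ.subst x t} (FOF.ex x φ)
  rall : ∀ (Γ : Finset FOF) (x y : ℕ) (φ : FOF), φ.freeFor y x →
    (∀ γ ∈ Γ, y ∉ γ.free) → y ∉ (FOF.all x φ).free →
    E Γ (φ.subst x y) → E Γ (FOF.all x φ)
  lex : ∀ (Γ : Finset FOF) (δ : FOF) (x y : ℕ) (φ : FOF), φ.freeFor y x →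
    (∀ γ ∈ Γ, y ∉ γ.free) → y ∉ δ.free → y ∉ (FOF.ex x φ).free →
    E (insert (φ.subst x y) Γ) δ → E (insert (FOF.ex x φ) Γ) δ

/-- Generators of classical predicate logic: `⊢_i^Q` plus reductio ad absurdum. -/
structure ClQGen (E : Finset FOF → FOF → Prop) extends IntQGen E : Prop where
  raa : ∀ φ : FOF, E {φ.neg.neg} φ

/-- Classical first-order predicate logic `⊢_c^Q`. -/
def ClQD (Γ : Finset FOF) (φ : FOF) : Prop :=
  ∀ E : Finset FOF → FOF → Prop, ClQGen E → E Γ φ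

/-- `⊢_i^Q` plus the additional axioms `Ax`. -/
def IntQExtD (Ax : Set (Finset FOF × FOF)) (Γ : Finset FOF) (φ : FOF) : Prop :=
  ∀ E : Finset FOF → FOF → Prop, IntQGen E → (∀ p ∈ Ax, E p.1 p.2) → E Γ φ



namespace GoedelAux

variable {E : Finset FOF → FOF → Prop}

lemma wk (hE : IntQGen E) {U V : Finset FOF} {a : FOF} (h : E U a) (hUV : U ⊆ V) :
    E V a := by
  have := hE.ent.mono U V a h
  rwa [Finset.union_eq_right.mpr hUV] at this

lemma cutIn (hE : IntQGen E) {Γ : Finset FOF} {a b : FOF}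
    (h1 : E Γ b) (h2 : E (insert b Γ) a) : E Γ a := by
  have := hE.ent.cut Γ Γ a b h1 h2
  rwa [Finset.union_self] at this

lemma mpD (hE : IntQGen E) {Γ : Finset FOF} {φ ψ : FOF}
    (h1 : E Γ φ) (h2 : E Γ (φ.imp ψ)) : E Γ ψ := by
  apply cutIn hE h1
  apply cutIn hE (wk hE h2 (Finset.subset_insert _ _))
  exact wk hE (hE.mp φ ψ) (by intro z hz; simp at hz; rcases hz with h | h <;> simp [h])

lemma negE (hE : IntQGen E) {Γ : Finset FOF} {φ : FOF}
    (h1 : E Γ φ.neg) (h2 : E Γ φ) : E Γ FOF.bot := by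
  have h3 : E Γ (φ.imp .bot) := by
    apply cutIn hE h1
    exact wk hE (hE.pc2 φ) (by simp)
  exact mpD hE h2 h3

lemma negI (hE : IntQGen E) {Γ : Finset FOF} {φ : FOF}
    (h : E (insert φ Γ) FOF.bot) : E Γ φ.neg := by
  have h1 : E Γ (φ.imp .bot) := hE.rimp Γ φ _ h
  apply cutIn hE h1
  exact wk hE (hE.pc1 φ) (by simp)

lemma reflD (hE : IntQGen E) {Γ : Finset FOF} {φ : FOF} (h : φ ∈ Γ) : E Γ φ :=
  hE.ent.refl Γ φ h

lemma dni (hE : IntQGen E) {Γ : Finset FOF} {φ : FOF} (h : E Γ φ) : E Γ φ.neg.neg := by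
  apply negI hE
  exact negE hE (reflD hE (by simp)) (wk hE h (Finset.subset_insert _ _))

lemma efqD (hE : IntQGen E) {Γ : Finset FOF} {φ : FOF} (h : E Γ FOF.bot) : E Γ φ := by
  apply cutIn hE h
  exact wk hE (hE.efq φ) (by simp)

/-- The nucleus law: `Γ, b ⊢ ¬¬a` implies `Γ, ¬¬b ⊢ ¬¬a`. -/
lemma ljD (hE : IntQGen E) {Γ : Finset FOF} {a b : FOF}
    (h : E (insert b Γ) a.neg.neg) : E (insert b.neg.neg Γ) a.neg.neg := by
  apply negI hE
  rw [Finset.insert_comm]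
  have hnb : E (insert a.neg Γ) b.neg := by
    apply negI hE
    apply negE hE (φ := a.neg)
    · exact wk hE h (by intro z hz; simp at hz ⊢; tauto)
    · exact reflD hE (by simp)
  apply negE hE (φ := b.neg)
  · exact reflD hE (by simp)
  · exact wk hE hnb (Finset.subset_insert _ _)

/-- `Γ, φ ⊢ ¬¬ψ` implies `Γ ⊢ ¬¬(φ → ψ)`. -/
lemma rimpDN (hE : IntQGen E) {Γ : Finset FOF} {φ ψ : FOF}
    (h : E (insert φ Γ) ψ.neg.neg) : E Γ (φ.imp ψ).neg.neg := by
  apply negI hE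
  set Δ := insert (φ.imp ψ).neg Γ with hΔ
  have hA : E Δ ψ.neg := by
    apply negI hE
    apply negE hE (φ := φ.imp ψ)
    · exact reflD hE (by simp [hΔ])
    · apply hE.rimp
      exact reflD hE (by simp)
  have hB : E Δ φ.neg.neg := by
    apply negI hE
    apply negE hE (φ := φ.imp ψ) (reflD hE (by simp [hΔ]))
    apply hE.rimp
    apply efqD hE
    exact negE hE (φ := φ) (reflD hE (by simp)) (reflD hE (by simp))
  have hC : E Δ φ.neg := by
    apply negI hE
    apply negE hE (φ := ψ.neg)
    · exact wk hE h (by intro z hz; simp [hΔ] at hz ⊢; tauto)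
    · exact wk hE hA (Finset.subset_insert _ _)
  exact negE hE hB hC

lemma intQGen_IntQExtD (Ax : Set (Finset FOF × FOF)) : IntQGen (IntQExtD Ax) where
  ent := {
    refl := fun U a h E hE _ => hE.ent.refl U a h
    mono := fun U U' a h E hE hax => hE.ent.mono U U' a (h E hE hax)
    cut := fun V V' a b h1 h2 E hE hax => hE.ent.cut V V' a b (h1 E hE hax) (h2 E hE hax) }
  rimp := fun Γ φ ψ h E hE hax => hE.rimp Γ φ ψ (h E hE hax)
  andI := fun φ ψ E hE _ => hE.andI φ ψ
  andE1 := fun φ ψ E hE _ => hE.andE1 φ ψ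
  andE2 := fun φ ψ E hE _ => hE.andE2 φ ψ
  orI1 := fun φ ψ E hE _ => hE.orI1 φ ψ
  orI2 := fun φ ψ E hE _ => hE.orI2 φ ψ
  orE := fun φ ψ δ E hE _ => hE.orE φ ψ δ
  mp := fun φ ψ E hE _ => hE.mp φ ψ
  topI := fun E hE _ => hE.topI
  pc1 := fun φ E hE _ => hE.pc1 φ
  pc2 := fun φ E hE _ => hE.pc2 φ
  efq := fun φ E hE _ => hE.efq φ
  lall := fun x t φ hf E hE _ => hE.lall x t φ hf
  rex := fun x t φ hf E hE _ => hE.rex x t φ hf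
  rall := fun Γ x y φ hf h1 h2 h E hE hax => hE.rall Γ x y φ hf h1 h2 (h E hE hax)
  lex := fun Γ δ x y φ hf h1 h2 h3 h E hE hax => hE.lex Γ δ x y φ hf h1 h2 h3 (h E hE hax)

/-- Bound variables of a formula. -/
def bnd : FOF → Finset ℕ
  | .pred _ _ => ∅
  | .top => ∅
  | .bot => ∅
  | .and φ ψ => bnd φ ∪ bnd ψ
  | .or φ ψ => bnd φ ∪ bnd ψ
  | .imp φ ψ => bnd φ ∪ bnd ψ
  | .neg φ => bnd φ
  | .all x φ => insert x (bnd φ)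
  | .ex x φ => insert x (bnd φ)

lemma freeFor_of_notMem_bnd {y : ℕ} : ∀ {φ : FOF}, y ∉ bnd φ → ∀ x, φ.freeFor y x := by
  intro φ
  induction φ with
  | pred n l => intro _ x; trivial
  | top => intro _ x; trivial
  | bot => intro _ x; trivial
  | and φ ψ ih1 ih2 =>
      intro h x
      simp only [bnd, Finset.mem_union] at h
      push_neg at h
      exact ⟨ih1 h.1 x, ih2 h.2 x⟩
  | or φ ψ ih1 ih2 =>
      intro h x
      simp only [bnd, Finset.mem_union] at h
      push_neg at h
      exact ⟨ih1 h.1 x, ih2 h.2 x⟩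
  | imp φ ψ ih1 ih2 =>
      intro h x
      simp only [bnd, Finset.mem_union] at h
      push_neg at h
      exact ⟨ih1 h.1 x, ih2 h.2 x⟩
  | neg φ ih =>
      intro h x
      exact ih h x
  | all z φ ih =>
      intro h x
      simp only [bnd, Finset.mem_insert] at h
      push_neg at h
      exact Or.inr ⟨h.1, ih h.2 x⟩
  | ex z φ ih =>
      intro h x
      simp only [bnd, Finset.mem_insert] at h
      push_neg at h
      exact Or.inr ⟨h.1, ih h.2 x⟩

/-- Classical derivation of `∀x¬¬φ ⊢ ∀xφ`. -/
lemma clq_dns (x : ℕ) (φ : FOF) : ClQD {FOF.all x φ.neg.neg} (FOF.all x φ) := by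
  intro E hE
  have hI := hE.toIntQGen
  obtain ⟨y, hy⟩ := Infinite.exists_notMem_finset (φ.free ∪ bnd φ)
  have hyf : y ∉ φ.free := fun h => hy (Finset.mem_union_left _ h)
  have hyb : y ∉ bnd φ := fun h => hy (Finset.mem_union_right _ h)
  have hff : φ.freeFor y x := freeFor_of_notMem_bnd hyb x
  have hff2 : (φ.neg.neg).freeFor y x := hff
  have h1 : E {FOF.all x φ.neg.neg} ((φ.neg.neg).subst x y) :=
    hI.lall x y (φ.neg.neg) hff2
  have h1' : E {FOF.all x φ.neg.neg} ((φ.subst x y).neg.neg) := h1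
  have h2 : E {FOF.all x φ.neg.neg} (φ.subst x y) := by
    apply cutIn hI h1'
    exact wk hI (hE.raa (φ.subst x y)) (by simp)
  refine hI.rall {FOF.all x φ.neg.neg} x y φ hff ?_ ?_ h2
  · intro γ hγ
    rw [Finset.mem_singleton] at hγ
    subst hγ
    show y ∉ ((φ.neg.neg).free).erase x
    intro hc
    exact hyf (Finset.mem_of_mem_erase hc)
  · show y ∉ (φ.free).erase x
    intro hc
    exact hyf (Finset.mem_of_mem_erase hc)

/-- The double-negation translation of `⊢_*` is a classical entailment, given DNS. -/
lemma clqgen_trans (Ax : Set (Finset FOF × FOF))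
    (hdns : ∀ (x : ℕ) (φ : FOF),
      IntQExtD Ax {FOF.all x φ.neg.neg} (FOF.all x φ).neg.neg) :
    ClQGen (fun Γ φ => IntQExtD Ax Γ φ.neg.neg) := by
  have hT : IntQGen (IntQExtD Ax) := intQGen_IntQExtD Ax
  refine { ent := ?_, rimp := ?_, andI := ?_, andE1 := ?_, andE2 := ?_, orI1 := ?_,
           orI2 := ?_, orE := ?_, mp := ?_, topI := ?_, pc1 := ?_, pc2 := ?_, efq := ?_,
           lall := ?_, rex := ?_, rall := ?_, lex := ?_, raa := ?_ }
  · exact {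
      refl := fun U a h => dni hT (hT.ent.refl U a h)
      mono := fun U U' a h => hT.ent.mono U U' _ h
      cut := fun V V' a b h1 h2 => hT.ent.cut V V' _ _ h1 (ljD hT h2) }
  · exact fun Γ φ ψ h => rimpDN hT h
  · exact fun φ ψ => dni hT (hT.andI φ ψ)
  · exact fun φ ψ => dni hT (hT.andE1 φ ψ)
  · exact fun φ ψ => dni hT (hT.andE2 φ ψ)
  · exact fun φ ψ => dni hT (hT.orI1 φ ψ)
  · exact fun φ ψ => dni hT (hT.orI2 φ ψ)
  · exact fun φ ψ δ => dni hT (hT.orE φ ψ δ)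
  · exact fun φ ψ => dni hT (hT.mp φ ψ)
  · exact dni hT hT.topI
  · exact fun φ => dni hT (hT.pc1 φ)
  · exact fun φ => dni hT (hT.pc2 φ)
  · exact fun φ => dni hT (hT.efq φ)
  · exact fun x t φ hf => dni hT (hT.lall x t φ hf)
  · exact fun x t φ hf => dni hT (hT.rex x t φ hf)
  · intro Γ x y φ hff hΓ hfree h
    have h' : IntQExtD Ax Γ ((φ.neg.neg).subst x y) := h
    have hff' : (φ.neg.neg).freeFor y x := hff
    have hfree' : y ∉ (FOF.all x φ.neg.neg).free := hfree
    have h1 : IntQExtD Ax Γ (FOF.all x φ.neg.neg) :=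
      hT.rall Γ x y (φ.neg.neg) hff' hΓ hfree' h'
    apply cutIn hT h1
    exact wk hT (hdns x φ) (by simp)
  · intro Γ δ x y φ hff hΓ hδ hex h
    exact hT.lex Γ (δ.neg.neg) x y φ hff hΓ hδ hex h
  · intro φ
    exact hT.ent.refl _ _ (Finset.mem_singleton_self _)

end GoedelAux

/-- Gödel's theorem: for `⊢_*^Q` intuitionistic predicate logic
plus additional axioms contained in classical predicate logic, one has
`Γ ⊢_c^Q φ ↔ Γ ⊢_*^Q ¬¬φ` (for all `Γ`, `φ`) if and only if `⊢_*^Q` satisfies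
the double negation shift `∀x¬¬φ ⊢ ¬¬∀xφ`. -/
theorem goedel_double_negation (Ax : Set (Finset FOF × FOF))
    (hAx : ∀ p ∈ Ax, ClQD p.1 p.2) :
    (∀ (Γ : Finset FOF) (φ : FOF), ClQD Γ φ ↔ IntQExtD Ax Γ φ.neg.neg) ↔
      (∀ (x : ℕ) (φ : FOF),
        IntQExtD Ax {FOF.all x φ.neg.neg} (FOF.all x φ).neg.neg) := by
  constructor
  · intro h x φ
    exact (h {FOF.all x φ.neg.neg} (FOF.all x φ)).mp (GoedelAux.clq_dns x φ)
  · intro hdns Γ φ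
    constructor
    · intro hc
      exact hc _ (GoedelAux.clqgen_trans Ax hdns)
    · intro hi E hE
      have h1 : E Γ φ.neg.neg := hi E hE.toIntQGen (fun p hp => hAx p hp E hE)
      apply GoedelAux.cutIn hE.toIntQGen h1
      exact GoedelAux.wk hE.toIntQGen (hE.raa φ) (by simp)
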